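/- Discriminant lemma: let d ≥ 1 and let p satisfy 1 < p < 2d/(d−2) if d ≥ 3, or 1 < p < ∞ if d = 1 or d = 2, with p ≠ 2. Set A := (p−1)² (d−1)²/(d+2)² − p + 2 and B := p − 3 − d(p−1)/(d+2). Then B² − 4A > 0, and consequently there exists β ∈ ℝ, β ≠ 0, such that A β² + B β + 1 < 0. -/

import Mathlib

/-- Discriminant lemma: with `A = (p−1)²(d−1)²/(d+2)² − p + 2` and
`B = p − 3 − d(p−1)/(d+2)`, one has `B² − 4A > 0`, hence there is `β ≠ 0`
with `A β² + B β + 1 < 0`. -/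
theorem discriminant_lemma (d : ℕ) (hd : 1 ≤ d) (p : ℝ) (hp1 : 1 < p) (hp2 : p ≠ 2)
    (hp3 : 3 ≤ d → p < 2 * d / ((d : ℝ) - 2)) :
    (p - 3 - (d : ℝ) * (p - 1) / ((d : ℝ) + 2)) ^ 2 -
        4 * ((p - 1) ^ 2 * ((d : ℝ) - 1) ^ 2 / ((d : ℝ) + 2) ^ 2 - p + 2) > 0 ∧
      ∃ β : ℝ, β ≠ 0 ∧
        ((p - 1) ^ 2 * ((d : ℝ) - 1) ^ 2 / ((d : ℝ) + 2) ^ 2 - p + 2) * β ^ 2 +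
            (p - 3 - (d : ℝ) * (p - 1) / ((d : ℝ) + 2)) * β + 1 < 0 := by
  have hd1 : (1 : ℝ) ≤ (d : ℝ) := by exact_mod_cast hd
  have hD : (0 : ℝ) < (d : ℝ) + 2 := by linarith
  have hDne : ((d : ℝ) + 2) ≠ 0 := ne_of_gt hD
  set A : ℝ := (p - 1) ^ 2 * ((d : ℝ) - 1) ^ 2 / ((d : ℝ) + 2) ^ 2 - p + 2 with hAdef
  set B : ℝ := p - 3 - (d : ℝ) * (p - 1) / ((d : ℝ) + 2) with hBdef
  -- key inequality: (d-2)p < 2d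
  have hkey : ((d : ℝ) - 2) * p < 2 * (d : ℝ) := by
    by_cases h3 : 3 ≤ d
    · have h3' : (3 : ℝ) ≤ (d : ℝ) := by exact_mod_cast h3
      have hdm : (0 : ℝ) < (d : ℝ) - 2 := by linarith
      have := hp3 h3
      calc ((d : ℝ) - 2) * p < ((d : ℝ) - 2) * (2 * d / ((d : ℝ) - 2)) := by
            exact mul_lt_mul_of_pos_left this hdm
        _ = 2 * (d : ℝ) := by field_simp
    · have : d < 3 := by omega
      have h2 : (d : ℝ) ≤ 2 := by
        have : d ≤ 2 := by omega
        exact_mod_cast this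
      nlinarith
  -- closed form for the discriminant
  have hdisc : B ^ 2 - 4 * A =
      4 * (d : ℝ) * (p - 1) * (2 * (d : ℝ) - ((d : ℝ) - 2) * p) / ((d : ℝ) + 2) ^ 2 := by
    rw [hAdef, hBdef]
    field_simp
    ring
  have hdpos : (0 : ℝ) < (d : ℝ) := by linarith
  have hpos : B ^ 2 - 4 * A > 0 := by
    rw [hdisc]
    apply div_pos
    · have h1 : (0 : ℝ) < p - 1 := by linarith
      have h2 : (0 : ℝ) < 2 * (d : ℝ) - ((d : ℝ) - 2) * p := by linarith
      positivity
    · positivity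
  refine ⟨hpos, ?_⟩
  rcases lt_trichotomy A 0 with hA | hA | hA
  · -- A < 0 : take β = max 1 ((|B|+2)/(-A))
    set β : ℝ := max 1 ((|B| + 2) / (-A)) with hβdef
    have hβ1 : 1 ≤ β := le_max_left _ _
    have hβ2 : (|B| + 2) / (-A) ≤ β := le_max_right _ _
    have hnA : (0 : ℝ) < -A := by linarith
    have hAβ : -A * β ≥ |B| + 2 := by
      have := (div_le_iff₀ hnA).mp hβ2
      linarith
    have hβpos : (0 : ℝ) < β := by linarith
    refine ⟨β, by positivity, ?_⟩
    have hB1 : B ≤ |B| := le_abs_self B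
    nlinarith [abs_nonneg B]
  · -- A = 0 : take β = -2/B
    have hBne : B ≠ 0 := by
      intro h
      rw [h, hA] at hpos
      norm_num at hpos
    refine ⟨-2 / B, by simp [hBne], ?_⟩
    rw [hA]
    field_simp
    rw [show (2 * (0 * 2 + -B ^ 2) + B ^ 2) = -B ^ 2 by ring, neg_div, div_self (pow_ne_zero 2 hBne)]
    norm_num
  · -- A > 0 : take β = -B/(2A)
    set β : ℝ := -B / (2 * A) with hβdef
    have hAne : A ≠ 0 := ne_of_gt hA
    have h4 : (4 * A) * (A * β ^ 2 + B * β + 1) = 4 * A - B ^ 2 := by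
      rw [hβdef]; field_simp; ring
    have hlt : A * β ^ 2 + B * β + 1 < 0 := by nlinarith
    refine ⟨β, ?_, hlt⟩
    intro h
    rw [h] at hlt
    norm_num at hlt
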